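/- Let p and q be probability distributions on Y and let J(D) = E_{y∼p}[log D(y)] + E_{y∼q}[log(1-D(y))]. Then sup_{D : Y → (0,1)} J(D) = -2 log 2 + 2·JSD(p ‖ q), where JSD denotes the Jensen–Shannon divergence. In particular the supremum equals -2 log 2 if and only if p = q. -/

import Mathlib

open Real Finset

/-- pointwise optimality of d = a/(a+b) -/
lemma gan_ptwise (a b d : ℝ) (ha : 0 < a) (hb : 0 < b) (hd0 : 0 < d) (hd1 : d < 1) :
    a * Real.log d + b * Real.log (1 - d) ≤
      a * Real.log (a / (a + b)) + b * Real.log (b / (a + b)) := by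
  have hab : 0 < a + b := by linarith
  have h1d : 0 < 1 - d := by linarith
  have e1 : Real.log (d * (a + b) / a) = Real.log d - Real.log (a / (a + b)) := by
    rw [Real.log_div (by positivity) ha.ne', Real.log_mul hd0.ne' hab.ne',
      Real.log_div ha.ne' hab.ne']
    ring
  have e2 : Real.log ((1 - d) * (a + b) / b) = Real.log (1 - d) - Real.log (b / (a + b)) := by
    rw [Real.log_div (by positivity) hb.ne', Real.log_mul h1d.ne' hab.ne',
      Real.log_div hb.ne' hab.ne']
    ring
  have l1 := Real.log_le_sub_one_of_pos (x := d * (a + b) / a) (by positivity)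
  have l2 := Real.log_le_sub_one_of_pos (x := (1 - d) * (a + b) / b) (by positivity)
  rw [e1] at l1
  rw [e2] at l2
  have m1 := mul_le_mul_of_nonneg_left l1 ha.le
  have m2 := mul_le_mul_of_nonneg_left l2 hb.le
  have r1 : a * (d * (a + b) / a - 1) = d * (a + b) - a := by field_simp
  have r2 : b * ((1 - d) * (a + b) / b - 1) = (1 - d) * (a + b) - b := by field_simp
  rw [r1] at m1
  rw [r2] at m2
  nlinarith [m1, m2]

/-- strict positivity of the pointwise JSD term when a ≠ b -/
lemma gan_jsd_pos (a b : ℝ) (ha : 0 < a) (hb : 0 < b) (hne : a ≠ b) :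
    0 < a * Real.log (2 * a / (a + b)) + b * Real.log (2 * b / (a + b)) := by
  have hab : 0 < a + b := by linarith
  have e1 : Real.log ((a + b) / (2 * a)) = - Real.log (2 * a / (a + b)) := by
    rw [← Real.log_inv]; congr 1; field_simp
  have e2 : Real.log ((a + b) / (2 * b)) = - Real.log (2 * b / (a + b)) := by
    rw [← Real.log_inv]; congr 1; field_simp
  have l1 := Real.log_lt_sub_one_of_pos (x := (a + b) / (2 * a)) (by positivity)
    (by intro h; apply hne; field_simp at h; linarith)
  have l2 := Real.log_lt_sub_one_of_pos (x := (a + b) / (2 * b)) (by positivity)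
    (by intro h; apply hne; field_simp at h; linarith)
  rw [e1] at l1
  rw [e2] at l2
  have m1 := mul_lt_mul_of_pos_left l1 ha
  have m2 := mul_lt_mul_of_pos_left l2 hb
  have r1 : a * ((a + b) / (2 * a) - 1) = (a + b) / 2 - a := by field_simp
  have r2 : b * ((a + b) / (2 * b) - 1) = (a + b) / 2 - b := by field_simp
  rw [r1] at m1
  rw [r2] at m2
  nlinarith [m1, m2]

lemma gan_jsd_nonneg (a b : ℝ) (ha : 0 < a) (hb : 0 < b) :
    0 ≤ a * Real.log (2 * a / (a + b)) + b * Real.log (2 * b / (a + b)) := by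
  rcases eq_or_ne a b with h | h
  · subst h
    have : 2 * a / (a + a) = 1 := by field_simp; ring
    simp [this]
  · exact (gan_jsd_pos a b ha hb h).le

/-- The optimal value of the GAN discriminator objective equals
`-2 log 2 + 2 JSD(p ‖ q)`, and equals `-2 log 2` iff `p = q`
(finite sample space, positive probability mass functions). -/
theorem discriminator_sup_JSD {Y : Type*} [Fintype Y] [Nonempty Y] (p q : Y → ℝ)
    (hp : ∀ y, 0 < p y) (hq : ∀ y, 0 < q y)
    (hps : ∑ y, p y = 1) (hqs : ∑ y, q y = 1) :
    ((⨆ D : {D : Y → ℝ // ∀ y, D y ∈ Set.Ioo (0:ℝ) 1},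
        (∑ y, p y * Real.log (D.1 y) + ∑ y, q y * Real.log (1 - D.1 y)))
      = -2 * Real.log 2 +
          2 * ((1/2) * ∑ y, p y * Real.log (p y / ((p y + q y) / 2))
             + (1/2) * ∑ y, q y * Real.log (q y / ((p y + q y) / 2)))) ∧
    ((⨆ D : {D : Y → ℝ // ∀ y, D y ∈ Set.Ioo (0:ℝ) 1},
        (∑ y, p y * Real.log (D.1 y) + ∑ y, q y * Real.log (1 - D.1 y)))
      = -2 * Real.log 2 ↔ p = q) := by
  have hpq : ∀ y, 0 < p y + q y := fun y => by have := hp y; have := hq y; linarith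
  set M : ℝ := ∑ y, p y * Real.log (p y / (p y + q y))
      + ∑ y, q y * Real.log (q y / (p y + q y)) with hM
  -- the optimal discriminator
  have hD0 : ∀ y, p y / (p y + q y) ∈ Set.Ioo (0:ℝ) 1 := by
    intro y
    exact ⟨div_pos (hp y) (hpq y), by rw [div_lt_one (hpq y)]; linarith [hq y]⟩
  set D0 : {D : Y → ℝ // ∀ y, D y ∈ Set.Ioo (0:ℝ) 1} := ⟨fun y => p y / (p y + q y), hD0⟩
  haveI : Nonempty {D : Y → ℝ // ∀ y, D y ∈ Set.Ioo (0:ℝ) 1} :=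
    ⟨⟨fun _ => 1/2, fun _ => ⟨by norm_num, by norm_num⟩⟩⟩
  -- every D is bounded by M
  have hub : ∀ D : {D : Y → ℝ // ∀ y, D y ∈ Set.Ioo (0:ℝ) 1},
      (∑ y, p y * Real.log (D.1 y) + ∑ y, q y * Real.log (1 - D.1 y)) ≤ M := by
    intro D
    rw [hM, ← Finset.sum_add_distrib, ← Finset.sum_add_distrib]
    exact Finset.sum_le_sum fun y _ =>
      gan_ptwise (p y) (q y) (D.1 y) (hp y) (hq y) (D.2 y).1 (D.2 y).2
  -- D0 achieves M
  have hval : (∑ y, p y * Real.log (D0.1 y) + ∑ y, q y * Real.log (1 - D0.1 y)) = M := by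
    rw [hM]
    congr 1
    apply Finset.sum_congr rfl
    intro y _
    congr 2
    have h := (hpq y).ne'
    field_simp
    show (1 - p y / (p y + q y)) * (p y + q y) = q y
    rw [sub_mul, div_mul_cancel₀ _ h]; ring
  have hsup : (⨆ D : {D : Y → ℝ // ∀ y, D y ∈ Set.Ioo (0:ℝ) 1},
      (∑ y, p y * Real.log (D.1 y) + ∑ y, q y * Real.log (1 - D.1 y))) = M := by
    apply le_antisymm (ciSup_le hub)
    rw [← hval]
    exact le_ciSup ⟨M, by rintro x ⟨D, rfl⟩; exact hub D⟩ D0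
  -- the sum S = M + 2 log 2
  have hsplit1 : ∑ y, p y * Real.log (p y / ((p y + q y) / 2))
      = (∑ y, p y * Real.log (p y / (p y + q y))) + Real.log 2 := by
    have : ∀ y ∈ Finset.univ, p y * Real.log (p y / ((p y + q y) / 2))
        = p y * Real.log (p y / (p y + q y)) + p y * Real.log 2 := by
      intro y _
      have e : p y / ((p y + q y) / 2) = (p y / (p y + q y)) * 2 := by
        field_simp
      rw [e, Real.log_mul (div_pos (hp y) (hpq y)).ne' (by norm_num), mul_add]
    rw [Finset.sum_congr rfl this, Finset.sum_add_distrib, ← Finset.sum_mul, hps, one_mul]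
  have hsplit2 : ∑ y, q y * Real.log (q y / ((p y + q y) / 2))
      = (∑ y, q y * Real.log (q y / (p y + q y))) + Real.log 2 := by
    have : ∀ y ∈ Finset.univ, q y * Real.log (q y / ((p y + q y) / 2))
        = q y * Real.log (q y / (p y + q y)) + q y * Real.log 2 := by
      intro y _
      have e : q y / ((p y + q y) / 2) = (q y / (p y + q y)) * 2 := by
        field_simp
      rw [e, Real.log_mul (div_pos (hq y) (hpq y)).ne' (by norm_num), mul_add]
    rw [Finset.sum_congr rfl this, Finset.sum_add_distrib, ← Finset.sum_mul, hqs, one_mul]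
  constructor
  · rw [hsup, hsplit1, hsplit2, hM]; ring
  · rw [hsup]
    constructor
    · intro hMeq
      -- S := ∑ pointwise JSD terms is zero, each nonneg ⇒ each zero ⇒ p = q
      have hS : ∑ y, (p y * Real.log (2 * p y / (p y + q y))
          + q y * Real.log (2 * q y / (p y + q y))) = 0 := by
        have e : ∀ y ∈ Finset.univ, (p y * Real.log (2 * p y / (p y + q y))
            + q y * Real.log (2 * q y / (p y + q y)))
            = (p y * Real.log (p y / ((p y + q y) / 2))
              + q y * Real.log (q y / ((p y + q y) / 2))) := by
          intro y _
          have e1 : 2 * p y / (p y + q y) = p y / ((p y + q y) / 2) := by field_simp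
          have e2 : 2 * q y / (p y + q y) = q y / ((p y + q y) / 2) := by field_simp
          rw [e1, e2]
        rw [Finset.sum_congr rfl e, Finset.sum_add_distrib, hsplit1, hsplit2, hM] at *
        linarith [hMeq]
      have hzero := (Finset.sum_eq_zero_iff_of_nonneg
        (fun y _ => gan_jsd_nonneg (p y) (q y) (hp y) (hq y))).1 hS
      funext y
      by_contra hne
      exact (gan_jsd_pos (p y) (q y) (hp y) (hq y) hne).ne' (hzero y (Finset.mem_univ y))
    · intro hpq'
      subst hpq'
      rw [hM]
      have e : ∀ y ∈ Finset.univ, p y * Real.log (p y / (p y + p y))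
          = p y * Real.log 2⁻¹ := by
        intro y _
        congr 2
        rw [div_eq_iff (hpq y).ne']
        ring
      rw [Finset.sum_congr rfl e, ← Finset.sum_mul, hps, one_mul, Real.log_inv]
      ring
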